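/- Let f : ℝ^p → ℝ be differentiable with L-Lipschitz continuous gradient, suppose f attains its infimum f* = inf_y f(y) and the solution set Y* = {y ∈ ℝ^p : f(y) = f*} is nonempty, and suppose f satisfies the μ-Polyak–Łojasiewicz condition ‖∇f(y)‖² ≥ 2μ (f(y) − f*) for all y, with μ > 0. Then f satisfies the quadratic growth condition with constant μ: for every y ∈ ℝ^p, f(y) − f* ≥ (μ/2) · dist(y, Y*)², where dist(y, Y*) = inf_{y* ∈ Y*} ‖y − y*‖. -/

import Mathlib

open scoped RealInnerProductSpace

private lemma stmt2Aux_arith (a b N η θ s : ℝ) (han : 0 ≤ a) (hbn : 0 ≤ b) (hba : b ≤ a)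
    (hη : 0 < η) (hθ : 0 < θ) (hs0 : 0 < s)
    (hdesc : b ^ 2 ≤ a ^ 2 - η * θ * N ^ 2) (hPLa : 2 * s * a ≤ N) (hN0 : 0 ≤ N) :
    θ * s * (η * N) ≤ a - b := by
  rcases eq_or_lt_of_le han with hae | hapos
  · have h1 : η * θ * N ^ 2 ≤ η * θ * 0 := by nlinarith [sq_nonneg b]
    have h2 : N ^ 2 ≤ 0 := le_of_mul_le_mul_left h1 (mul_pos hη hθ)
    have hNz : N = 0 := by nlinarith [sq_nonneg N]
    have hbz : b = 0 := by nlinarith [sq_nonneg b]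
    rw [hNz, hbz, ← hae]; simp
  · have stmt2Aux_key : θ * s * (η * N) * (a + b) ≤ (a - b) * (a + b) := by
      have h3 : s * (a + b) ≤ N := by nlinarith
      have h5 : θ * s * (η * N) * (a + b) = η * θ * N * (s * (a + b)) := by ring
      rw [h5]
      have h6 : η * θ * N * (s * (a + b)) ≤ η * θ * N * N :=
        mul_le_mul_of_nonneg_left h3 (by positivity)
      nlinarith [h6]
    have hab : 0 < a + b := by linarith
    exact le_of_mul_le_mul_right stmt2Aux_key hab

private lemma stmt2Aux_descent {p : ℕ} (L : ℝ) (f : EuclideanSpace ℝ (Fin p) → ℝ)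
    (f' : EuclideanSpace ℝ (Fin p) → EuclideanSpace ℝ (Fin p))
    (hdiff : ∀ y, HasGradientAt f (f' y) y)
    (hlip : ∀ y₁ y₂, ‖f' y₁ - f' y₂‖ ≤ L * ‖y₁ - y₂‖)
    (x v : EuclideanSpace ℝ (Fin p)) :
    f (x + v) ≤ f x + ⟪f' x, v⟫ + L / 2 * ‖v‖ ^ 2 := by
  set φ : ℝ → ℝ := fun t => f (x + t • v) - t * ⟪f' x, v⟫ - L / 2 * t ^ 2 * ‖v‖ ^ 2 with hφdef
  have hder : ∀ t : ℝ, HasDerivAt φ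
      (⟪f' (x + t • v), v⟫ - ⟪f' x, v⟫ - L / 2 * (2 * t) * ‖v‖ ^ 2) t := by
    intro t
    have h1 : HasDerivAt (fun t : ℝ => x + t • v) v t := by
      simpa using ((hasDerivAt_id t).smul_const v).const_add x
    have h2 : HasDerivAt (fun t : ℝ => f (x + t • v)) ⟪f' (x + t • v), v⟫ t := by
      have h := (hdiff (x + t • v)).hasFDerivAt.comp_hasDerivAt t h1
      simp at h
      exact h
    have h3 : HasDerivAt (fun t : ℝ => t * ⟪f' x, v⟫) ⟪f' x, v⟫ t := by
      simpa using (hasDerivAt_id t).mul_const (⟪f' x, v⟫ : ℝ)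
    have h4 : HasDerivAt (fun t : ℝ => L / 2 * t ^ 2 * ‖v‖ ^ 2)
        (L / 2 * (2 * t) * ‖v‖ ^ 2) t := by
      have := ((hasDerivAt_pow 2 t).const_mul (L / 2)).mul_const (‖v‖ ^ 2)
      simpa using this
    exact (h2.sub h3).sub h4
  have hanti : AntitoneOn φ (Set.Icc (0:ℝ) 1) := by
    apply antitoneOn_of_deriv_nonpos (convex_Icc 0 1)
    · exact Continuous.continuousOn (by
        have : Continuous φ := by
          have : Differentiable ℝ φ := fun t => (hder t).differentiableAt
          exact this.continuous
        exact this)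
    · intro t ht
      exact (hder t).differentiableAt.differentiableWithinAt
    · intro t ht
      rw [interior_Icc] at ht
      rw [(hder t).deriv]
      have hip : ⟪f' (x + t • v) - f' x, v⟫ ≤ ‖f' (x + t • v) - f' x‖ * ‖v‖ :=
        real_inner_le_norm _ _
      have hnd : ‖f' (x + t • v) - f' x‖ ≤ L * (t * ‖v‖) := by
        have := hlip (x + t • v) x
        have he : ‖(x + t • v) - x‖ = t * ‖v‖ := by
          rw [add_sub_cancel_left, norm_smul, Real.norm_eq_abs, abs_of_pos ht.1]
        rwa [he] at this
      have : ⟪f' (x + t • v) - f' x, v⟫ ≤ L * (t * ‖v‖) * ‖v‖ :=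
        hip.trans (mul_le_mul_of_nonneg_right hnd (norm_nonneg _))
      rw [inner_sub_left] at this
      nlinarith [this]
  have := hanti (Set.left_mem_Icc.2 zero_le_one) (Set.right_mem_Icc.2 zero_le_one) zero_le_one
  simp only [hφdef] at this
  simp only [zero_smul, add_zero, one_smul, zero_mul, one_pow] at this
  linarith [this]

private lemma stmt2Aux_step {p : ℕ} (μ L η : ℝ) (hμ : 0 < μ) (hη : 0 < η)
    (f : EuclideanSpace ℝ (Fin p) → ℝ)
    (f' : EuclideanSpace ℝ (Fin p) → EuclideanSpace ℝ (Fin p))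
    (hdiff : ∀ y, HasGradientAt f (f' y) y)
    (hlip : ∀ y₁ y₂, ‖f' y₁ - f' y₂‖ ≤ L * ‖y₁ - y₂‖)
    (fstar : ℝ) (hlow : ∀ y, fstar ≤ f y)
    (hPL : ∀ y, ‖f' y‖ ^ 2 ≥ 2 * μ * (f y - fstar))
    (hθ : 0 < 1 - L * η / 2) (w : EuclideanSpace ℝ (Fin p)) :
    Real.sqrt (f (w - η • f' w) - fstar) ≤ Real.sqrt (f w - fstar) ∧
    (1 - L * η / 2) * Real.sqrt (μ / 2) * ‖(w - η • f' w) - w‖ ≤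
      Real.sqrt (f w - fstar) - Real.sqrt (f (w - η • f' w) - fstar) := by
  have hN0 : (0:ℝ) ≤ ‖f' w‖ := norm_nonneg _
  have hdesc : f (w - η • f' w) - fstar ≤
      (f w - fstar) - η * (1 - L * η / 2) * ‖f' w‖ ^ 2 := by
    have h := stmt2Aux_descent L f f' hdiff hlip w (-(η • f' w))
    have he : w + -(η • f' w) = w - η • f' w := by abel
    rw [he] at h
    have hi : ⟪f' w, -(η • f' w)⟫ = -(η * ‖f' w‖ ^ 2) := by
      rw [inner_neg_right, real_inner_smul_right, real_inner_self_eq_norm_sq]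
    have hn : ‖-(η • f' w)‖ ^ 2 = η ^ 2 * ‖f' w‖ ^ 2 := by
      rw [norm_neg, norm_smul, Real.norm_eq_abs, abs_of_pos hη, mul_pow]
    rw [hi, hn] at h
    nlinarith [h]
  have ha0 : 0 ≤ f w - fstar := sub_nonneg.2 (hlow w)
  have hb0 : 0 ≤ f (w - η • f' w) - fstar := sub_nonneg.2 (hlow _)
  have ha2 : Real.sqrt (f w - fstar) ^ 2 = f w - fstar := Real.sq_sqrt ha0
  have hb2 : Real.sqrt (f (w - η • f' w) - fstar) ^ 2 = f (w - η • f' w) - fstar :=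
    Real.sq_sqrt hb0
  have han : 0 ≤ Real.sqrt (f w - fstar) := Real.sqrt_nonneg _
  have hbn : 0 ≤ Real.sqrt (f (w - η • f' w) - fstar) := Real.sqrt_nonneg _
  have hba : Real.sqrt (f (w - η • f' w) - fstar) ≤ Real.sqrt (f w - fstar) := by
    apply Real.sqrt_le_sqrt
    nlinarith [hdesc, mul_nonneg (mul_nonneg hη.le hθ.le) (sq_nonneg ‖f' w‖)]
  refine ⟨hba, ?_⟩
  have hnorm : ‖(w - η • f' w) - w‖ = η * ‖f' w‖ := by
    rw [sub_sub_cancel_left, norm_neg, norm_smul, Real.norm_eq_abs, abs_of_pos hη]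
  rw [hnorm]
  have hs : Real.sqrt (μ / 2) ^ 2 = μ / 2 := Real.sq_sqrt (by positivity)
  have hs0 : 0 < Real.sqrt (μ / 2) := Real.sqrt_pos.2 (by positivity)
  have hPLa : 2 * Real.sqrt (μ / 2) * Real.sqrt (f w - fstar) ≤ ‖f' w‖ := by
    have h1 : (2 * Real.sqrt (μ / 2) * Real.sqrt (f w - fstar)) ^ 2 ≤ ‖f' w‖ ^ 2 := by
      have he : (2 * Real.sqrt (μ / 2) * Real.sqrt (f w - fstar)) ^ 2
          = 4 * (μ / 2) * (f w - fstar) := by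
        rw [mul_pow, mul_pow, hs, ha2]; norm_num
      rw [he]
      have := hPL w
      linarith
    have h2 := Real.sqrt_le_sqrt h1
    rwa [Real.sqrt_sq (by positivity), Real.sqrt_sq hN0] at h2
  exact stmt2Aux_arith _ _ _ _ _ _ han hbn hba hη hθ hs0 (by rw [ha2, hb2]; linarith [hdesc])
    hPLa hN0

private lemma stmt2Aux_key {p : ℕ} (μ L η : ℝ) (hμ : 0 < μ) (hη : 0 < η) (hL : 0 ≤ L)
    (f : EuclideanSpace ℝ (Fin p) → ℝ)
    (f' : EuclideanSpace ℝ (Fin p) → EuclideanSpace ℝ (Fin p))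
    (hdiff : ∀ y, HasGradientAt f (f' y) y)
    (hlip : ∀ y₁ y₂, ‖f' y₁ - f' y₂‖ ≤ L * ‖y₁ - y₂‖)
    (fstar : ℝ) (hlow : ∀ y, fstar ≤ f y)
    (hPL : ∀ y, ‖f' y‖ ^ 2 ≥ 2 * μ * (f y - fstar))
    (hθ : 0 < 1 - L * η / 2) (y₀ : EuclideanSpace ℝ (Fin p)) :
    (1 - L * η / 2) * Real.sqrt (μ / 2) * Metric.infDist y₀ {z | f z = fstar} ≤
      Real.sqrt (f y₀ - fstar) := by
  set c : ℝ := (1 - L * η / 2) * Real.sqrt (μ / 2) with hcdef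
  have hc0 : 0 < c := mul_pos hθ (Real.sqrt_pos.2 (by positivity))
  set y : ℕ → EuclideanSpace ℝ (Fin p) := fun n => (fun z => z - η • f' z)^[n] y₀ with hy
  have hy0 : y 0 = y₀ := rfl
  have hysucc : ∀ n, y (n + 1) = y n - η • f' (y n) := by
    intro n
    rw [hy]
    simp only [Function.iterate_succ_apply']
  set g : ℕ → ℝ := fun n => Real.sqrt (f (y n) - fstar) with hg
  have hgn : ∀ n, 0 ≤ g n := fun n => Real.sqrt_nonneg _
  set d : ℕ → ℝ := fun n => ‖y (n + 1) - y n‖ with hd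
  have hdn : ∀ n, 0 ≤ d n := fun n => norm_nonneg _
  have hstep : ∀ n, c * d n ≤ g n - g (n + 1) := by
    intro n
    have h := (stmt2Aux_step μ L η hμ hη f f' hdiff hlip fstar hlow hPL hθ (y n)).2
    show c * ‖y (n + 1) - y n‖ ≤
      Real.sqrt (f (y n) - fstar) - Real.sqrt (f (y (n + 1)) - fstar)
    rw [hysucc n]
    exact h
  -- partial sums bounded
  have hsum : ∀ n, ∑ k ∈ Finset.range n, d k ≤ g 0 / c := by
    intro n
    have h1 : c * ∑ k ∈ Finset.range n, d k ≤ g 0 - g n := by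
      rw [Finset.mul_sum]
      calc ∑ k ∈ Finset.range n, c * d k ≤ ∑ k ∈ Finset.range n, (g k - g (k + 1)) :=
            Finset.sum_le_sum fun k _ => hstep k
        _ = g 0 - g n := by rw [Finset.sum_range_sub' g n]
    rw [le_div_iff₀ hc0, mul_comm]
    linarith [hgn n, h1]
  have hdsummable : Summable d :=
    summable_of_sum_range_le hdn hsum
  have hcauchy : CauchySeq y := by
    apply cauchySeq_of_summable_dist
    convert hdsummable using 2 with n
    rw [dist_eq_norm, norm_sub_rev]
  obtain ⟨ybar, hybar⟩ := cauchySeq_tendsto_of_complete hcauchy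
  -- gradient tends to 0
  have hd0 : Filter.Tendsto d Filter.atTop (nhds 0) := hdsummable.tendsto_atTop_zero
  have hgrad0 : Filter.Tendsto (fun n => ‖f' (y n)‖) Filter.atTop (nhds 0) := by
    have heq : ∀ n, ‖f' (y n)‖ = (1 / η) * d n := by
      intro n
      show ‖f' (y n)‖ = 1 / η * ‖y (n + 1) - y n‖
      rw [hysucc n, sub_sub_cancel_left, norm_neg, norm_smul, Real.norm_eq_abs,
        abs_of_pos hη]
      field_simp
    simp only [heq]
    have := hd0.const_mul (1 / η)
    simpa using this
  have hf'cont : Continuous f' := by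
    have : LipschitzWith ⟨L, hL⟩ f' := by
      apply LipschitzWith.of_dist_le_mul
      intro a b
      rw [dist_eq_norm, dist_eq_norm]
      exact hlip a b
    exact this.continuous
  have hgradbar : f' ybar = 0 := by
    have h1 : Filter.Tendsto (fun n => ‖f' (y n)‖) Filter.atTop (nhds ‖f' ybar‖) :=
      (hf'cont.continuousAt.tendsto.comp hybar).norm
    have := tendsto_nhds_unique h1 hgrad0
    exact norm_eq_zero.1 this
  have hmem : ybar ∈ {z | f z = fstar} := by
    have h1 := hPL ybar
    rw [hgradbar] at h1
    simp only [norm_zero] at h1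
    have := hlow ybar
    simp only [Set.mem_setOf_eq]
    nlinarith
  -- distance bound
  have hdist : dist y₀ ybar ≤ g 0 / c := by
    have h1 : ∀ n, dist y₀ (y n) ≤ g 0 / c := by
      intro n
      calc dist y₀ (y n) = dist (y 0) (y n) := by rw [hy0]
        _ ≤ ∑ k ∈ Finset.range n, dist (y k) (y (k + 1)) := dist_le_range_sum_dist y n
        _ = ∑ k ∈ Finset.range n, d k := by
            apply Finset.sum_congr rfl
            intro k _
            show dist (y k) (y (k + 1)) = ‖y (k + 1) - y k‖
            rw [dist_eq_norm, norm_sub_rev]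
        _ ≤ g 0 / c := hsum n
    have h2 : Filter.Tendsto (fun n => dist y₀ (y n)) Filter.atTop (nhds (dist y₀ ybar)) :=
      (Continuous.tendsto (continuous_const.dist continuous_id) ybar).comp hybar
    exact le_of_tendsto h2 (Filter.Eventually.of_forall h1)
  have hinf : Metric.infDist y₀ {z | f z = fstar} ≤ g 0 / c :=
    le_trans (Metric.infDist_le_dist_of_mem hmem) hdist
  rw [← le_div_iff₀' hc0]
  exact hinf

/-- A differentiable function with `L`-Lipschitz gradient that attains its
infimum `f*` and satisfies the `μ`-PL condition satisfies the quadratic growth condition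
`f(y) − f* ≥ (μ/2) · dist(y, Y*)²`, where `Y* = {y : f y = f*}`. -/
theorem stmt_2 {p : ℕ} (μ L : ℝ) (hμ : 0 < μ)
    (f : EuclideanSpace ℝ (Fin p) → ℝ)
    (f' : EuclideanSpace ℝ (Fin p) → EuclideanSpace ℝ (Fin p))
    (hdiff : ∀ y, HasGradientAt f (f' y) y)
    (hlip : ∀ y₁ y₂, ‖f' y₁ - f' y₂‖ ≤ L * ‖y₁ - y₂‖)
    (fstar : ℝ) (hlow : ∀ y, fstar ≤ f y) (hattain : ∃ y, f y = fstar)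
    (hPL : ∀ y, ‖f' y‖ ^ 2 ≥ 2 * μ * (f y - fstar)) :
    ∀ y, f y - fstar ≥ (μ / 2) * Metric.infDist y {z | f z = fstar} ^ 2 := by
  intro y
  set M : ℝ := max L 0 with hM
  have hM0 : 0 ≤ M := le_max_right L 0
  have hlip' : ∀ y₁ y₂, ‖f' y₁ - f' y₂‖ ≤ M * ‖y₁ - y₂‖ := fun y₁ y₂ =>
    (hlip y₁ y₂).trans (mul_le_mul_of_nonneg_right (le_max_left L 0) (norm_nonneg _))
  set D : ℝ := Metric.infDist y {z | f z = fstar} with hD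
  have hD0 : 0 ≤ D := Metric.infDist_nonneg
  have ha0 : 0 ≤ f y - fstar := sub_nonneg.2 (hlow y)
  have hkey : ∀ η : ℝ, 0 < η → 0 < 1 - M * η / 2 →
      (1 - M * η / 2) ^ 2 * (μ / 2) * D ^ 2 ≤ f y - fstar := by
    intro η hη hθ
    have h := stmt2Aux_key μ M η hμ hη hM0 f f' hdiff hlip' fstar hlow hPL hθ y
    have hlhs0 : 0 ≤ (1 - M * η / 2) * Real.sqrt (μ / 2) * D := by positivity
    have h2 : ((1 - M * η / 2) * Real.sqrt (μ / 2) * D) ^ 2 ≤ Real.sqrt (f y - fstar) ^ 2 :=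
      pow_le_pow_left₀ hlhs0 h 2
    rw [Real.sq_sqrt ha0] at h2
    calc (1 - M * η / 2) ^ 2 * (μ / 2) * D ^ 2
        = ((1 - M * η / 2) * Real.sqrt (μ / 2) * D) ^ 2 := by
          rw [mul_pow, mul_pow, Real.sq_sqrt (by positivity : (0:ℝ) ≤ μ / 2)]
      _ ≤ f y - fstar := h2
  rw [ge_iff_le]
  apply le_of_forall_pos_le_add
  intro ε hε
  rcases eq_or_lt_of_le hM0 with hMz | hMpos
  · have := hkey 1 one_pos (by rw [← hMz]; norm_num)
    rw [← hMz] at this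
    norm_num at this
    linarith
  · rcases eq_or_lt_of_le hD0 with hDz | hDpos
    · rw [← hDz]; simpa using by linarith
    · set δ : ℝ := min (ε / (μ * D ^ 2)) (1 / 2) with hδdef
      have hδ0 : 0 < δ := lt_min (by positivity) (by norm_num)
      have hδhalf : δ ≤ 1 / 2 := min_le_right _ _
      have hδε : δ * (μ * D ^ 2) ≤ ε := by
        rw [← le_div_iff₀ (by positivity)]
        exact min_le_left _ _
      have hη : 0 < 2 * δ / M := by positivity
      have hθ : 0 < 1 - M * (2 * δ / M) / 2 := by
        have : M * (2 * δ / M) / 2 = δ := by field_simp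
        rw [this]; linarith
      have h := hkey (2 * δ / M) hη hθ
      have heq : M * (2 * δ / M) / 2 = δ := by field_simp
      rw [heq] at h
      nlinarith [h, mul_nonneg (mul_nonneg (sq_nonneg δ) hμ.le) (sq_nonneg D),
        mul_pos hμ (mul_pos hDpos hDpos)]
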